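/- Fix n, let R, A ∈ ℝⁿ, μ, ν ∈ ℝ, and let b ∈ [0,1]ⁿ be regression rank scores satisfying Aᵀb = (1−τ)Aᵀ𝟙, 𝟙ᵀb = (1−τ)n, and b_i = 1{R_i > μA_i + ν} for all i outside a set M ⊆ {1,…,n} with |M| ≤ p. Then for any constant c ∈ ℝ, |(1/n)Σᵢ (Aᵢ − c)·1{Rᵢ > μAᵢ + ν}| ≤ |(1/n)Σᵢ (Aᵢ − c)| · (1−τ) + (p/n)·maxᵢ |Aᵢ − c|. -/

import Mathlib

open Finset

/-- Rank-score bound: if `b ∈ [0,1]ⁿ` satisfies `Aᵀb = (1−τ)Aᵀ𝟙`, `𝟙ᵀb = (1−τ)n`, and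
`bᵢ = 1{Rᵢ > μAᵢ + ν}` outside a set `M` with `|M| ≤ p`, then for any `c ∈ ℝ`,
`|(1/n)Σᵢ(Aᵢ−c)1{Rᵢ > μAᵢ+ν}| ≤ |(1/n)Σᵢ(Aᵢ−c)|·(1−τ) + (p/n)·maxᵢ|Aᵢ−c|`. -/
theorem rank_score_covariance_bound
    (n p : ℕ) (hn : 0 < n)
    (R A : Fin n → ℝ) (μ ν τ c : ℝ) (hτ : τ ∈ Set.Ioo (0:ℝ) 1)
    (b : Fin n → ℝ) (hb : ∀ i, b i ∈ Set.Icc (0:ℝ) 1)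
    (M : Finset (Fin n)) (hM : M.card ≤ p)
    (hbM : ∀ i ∉ M, b i = if μ * A i + ν < R i then 1 else 0)
    (hA : ∑ i, A i * b i = (1 - τ) * ∑ i, A i)
    (h1 : ∑ i, b i = (1 - τ) * n) :
    |(1 / (n : ℝ)) * ∑ i, (A i - c) * (if μ * A i + ν < R i then 1 else 0)|
      ≤ |(1 / (n : ℝ)) * ∑ i, (A i - c)| * (1 - τ)
        + ((p : ℝ) / n) * (univ.sup' ⟨⟨0, hn⟩, mem_univ _⟩ fun i => |A i - c|) := by
  set S : ℝ := univ.sup' ⟨⟨0, hn⟩, mem_univ _⟩ fun i => |A i - c| with hS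
  set ind : Fin n → ℝ := fun i => if μ * A i + ν < R i then 1 else 0 with hind
  have hSle : ∀ i, |A i - c| ≤ S := fun i => le_sup' (fun i => |A i - c|) (mem_univ i)
  have hS0 : 0 ≤ S := le_trans (abs_nonneg _) (hSle ⟨0, hn⟩)
  have hfb : ∑ i, (A i - c) * b i = (1 - τ) * ∑ i, (A i - c) := by
    have : ∑ i, (A i - c) * b i = ∑ i, A i * b i - c * ∑ i, b i := by
      rw [Finset.mul_sum, ← Finset.sum_sub_distrib]; ring_nf
      exact Finset.sum_congr rfl fun i _ => by ring
    rw [this, hA, h1, Finset.sum_sub_distrib, Finset.sum_const]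
    simp [nsmul_eq_mul]; ring
  have hkey : ∑ i, (A i - c) * ind i
      = (1 - τ) * ∑ i, (A i - c) + ∑ i ∈ M, (A i - c) * (ind i - b i) := by
    have : ∑ i, (A i - c) * (ind i - b i) = ∑ i ∈ M, (A i - c) * (ind i - b i) := by
      rw [← Finset.sum_subset (Finset.subset_univ M)]
      intro i _ hi
      rw [hbM i hi]; simp [hind]
    calc ∑ i, (A i - c) * ind i
        = ∑ i, (A i - c) * b i + ∑ i, (A i - c) * (ind i - b i) := by
          rw [← Finset.sum_add_distrib]; congr 1; ext i; ring
      _ = (1 - τ) * ∑ i, (A i - c) + ∑ i ∈ M, (A i - c) * (ind i - b i) := by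
          rw [hfb, this]
  have hMbound : |∑ i ∈ M, (A i - c) * (ind i - b i)| ≤ (p : ℝ) * S := by
    calc |∑ i ∈ M, (A i - c) * (ind i - b i)|
        ≤ ∑ i ∈ M, |(A i - c) * (ind i - b i)| := Finset.abs_sum_le_sum_abs _ _
      _ ≤ ∑ _i ∈ M, S := by
          apply Finset.sum_le_sum
          intro i _
          rw [abs_mul]
          have h1 : |ind i - b i| ≤ 1 := by
            have := hb i
            simp only [hind]
            split <;> rw [abs_le] <;> constructor <;> linarith [this.1, this.2]
          calc |A i - c| * |ind i - b i| ≤ |A i - c| * 1 :=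
                mul_le_mul_of_nonneg_left h1 (abs_nonneg _)
            _ ≤ S := by rw [mul_one]; exact hSle i
      _ = M.card * S := by rw [Finset.sum_const, nsmul_eq_mul]
      _ ≤ (p : ℝ) * S := by
          apply mul_le_mul_of_nonneg_right _ hS0
          exact_mod_cast hM
  have hnpos : (0:ℝ) < n := by exact_mod_cast hn
  calc |(1 / (n : ℝ)) * ∑ i, (A i - c) * ind i|
      = (1 / (n : ℝ)) * |∑ i, (A i - c) * ind i| := by
        rw [abs_mul, abs_of_pos (by positivity : (0:ℝ) < 1 / n)]
    _ ≤ (1 / (n : ℝ)) * ((1 - τ) * |∑ i, (A i - c)| + (p : ℝ) * S) := by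
        apply mul_le_mul_of_nonneg_left _ (by positivity)
        rw [hkey]
        calc |(1 - τ) * ∑ i, (A i - c) + ∑ i ∈ M, (A i - c) * (ind i - b i)|
            ≤ |(1 - τ) * ∑ i, (A i - c)| + |∑ i ∈ M, (A i - c) * (ind i - b i)| :=
              abs_add_le _ _
          _ ≤ (1 - τ) * |∑ i, (A i - c)| + (p : ℝ) * S := by
              rw [abs_mul, abs_of_pos (by linarith [hτ.2] : (0:ℝ) < 1 - τ)]
              linarith [hMbound]
    _ = |(1 / (n : ℝ)) * ∑ i, (A i - c)| * (1 - τ) + ((p : ℝ) / n) * S := by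
        rw [abs_mul, abs_of_pos (by positivity : (0:ℝ) < 1 / n)]
        ring
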